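/- Let (x, y, s) be random variables on a countable space with y, s ∈ {0,1} and s = 1 implying y = 1 (so P(y = 0 ∧ s = 1) = 0). Then for any bounded function h: X × {0,1} → ℝ, E_{x,y,s}[h(x, y)] = Σ_x P(x) · ( P(s = 1 | x) h(x, 1) + P(s = 0 | x) · ( P(y = 1 | x, s = 0) h(x, 1) + P(y = 0 | x, s = 0) h(x, 0) ) ), where terms with P(s = 0 | x) = 0 are interpreted as zero; i.e., the expectation decomposes into the contribution of labeled (hence positive) examples and a weighted combination over unlabeled examples with weight w(x) = P(y = 1 | x, s = 0). -/

import Mathlib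

open MeasureTheory ProbabilityTheory

private lemma pu_aux_real (p q r h1 h0 : ℝ) (hp : 0 ≤ p) (hq : 0 ≤ q) (hr : 0 ≤ r) :
    p * h1 + q * h1 + r * h0
      = (p + (q + r)) * (p / (p + (q + r)) * h1
          + (q + r) / (p + (q + r)) * (q / (q + r) * h1 + r / (q + r) * h0)) := by
  by_cases hqr : q + r = 0
  · have hq0 : q = 0 := by linarith
    have hr0 : r = 0 := by linarith
    subst hq0; subst hr0
    by_cases hp0 : p = 0
    · simp [hp0]
    · field_simp
      ring
  · have hA : p + (q + r) ≠ 0 := by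
      have : 0 < q + r := lt_of_le_of_ne (by linarith) (Ne.symm hqr)
      nlinarith
    field_simp
    ring

/-- PU learning expectation decomposition: on a countable space with `z = (x, y, s)`, `y, s`
boolean and `s = 1` implying `y = 1` (i.e. `P(y = 0 ∧ s = 1) = 0`), for any bounded measurable
`h : X × {0,1} → ℝ`,
`E[h(x, y)] = ∑_x P(x) (P(s=1|x) h(x,1)
  + P(s=0|x) (P(y=1|x,s=0) h(x,1) + P(y=0|x,s=0) h(x,0)))`,
where terms with a zero denominator (interpreted as `0/0 = 0`) vanish. -/
theorem pu_expectation_decomposition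
    {X : Type*} [MeasurableSpace X] [MeasurableSingletonClass X] [Countable X]
    (P : Measure (X × Bool × Bool)) [IsProbabilityMeasure P]
    (hps : P {z | z.2.1 = false ∧ z.2.2 = true} = 0)
    (h : X → Bool → ℝ) (hh : Measurable fun z : X × Bool => h z.1 z.2)
    (C : ℝ) (hC : ∀ a b, |h a b| ≤ C) :
    ∫ z : X × Bool × Bool, h z.1 z.2.1 ∂P
      = ∑' a : X, (P {z | z.1 = a}).toReal *
          (((P {z | z.1 = a ∧ z.2.2 = true}).toReal / (P {z | z.1 = a}).toReal) * h a true
            + ((P {z | z.1 = a ∧ z.2.2 = false}).toReal / (P {z | z.1 = a}).toReal) *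
              (((P {z | z.1 = a ∧ z.2.1 = true ∧ z.2.2 = false}).toReal
                  / (P {z | z.1 = a ∧ z.2.2 = false}).toReal) * h a true
                + ((P {z | z.1 = a ∧ z.2.1 = false ∧ z.2.2 = false}).toReal
                  / (P {z | z.1 = a ∧ z.2.2 = false}).toReal) * h a false)) := by
  classical
  have hmeas : Measurable fun z : X × Bool × Bool => h z.1 z.2.1 :=
    hh.comp (measurable_fst.prodMk measurable_snd.fst)
  have hint : Integrable (fun z : X × Bool × Bool => h z.1 z.2.1) P := by
    refine ⟨hmeas.aestronglyMeasurable, ?_⟩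
    refine HasFiniteIntegral.of_bounded (C := C) ?_
    filter_upwards with z using by simpa using hC z.1 z.2.1
  rw [integral_countable' hint]
  simp only [measureReal_def]
  have hsing : Summable fun z : X × Bool × Bool => (P {z}).toReal := by
    apply ENNReal.summable_toReal
    exact ne_top_of_le_ne_top (measure_ne_top P Set.univ) (tsum_measure_le_measure_univ
      (fun i => (measurableSet_singleton i).nullMeasurableSet)
      (fun i j hij => (Set.disjoint_singleton.mpr hij).aedisjoint))
  have hsum : Summable fun z : X × Bool × Bool => (P {z}).toReal • h z.1 z.2.1 := by
    apply Summable.of_abs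
    refine Summable.of_nonneg_of_le (fun z => abs_nonneg _) (fun z => ?_)
      (hsing.mul_right C)
    rw [smul_eq_mul, abs_mul, abs_of_nonneg ENNReal.toReal_nonneg]
    exact mul_le_mul_of_nonneg_left (hC _ _) ENNReal.toReal_nonneg
  rw [Summable.tsum_prod' hsum (fun b => .of_finite)]
  refine tsum_congr fun a => ?_
  -- inner sum over Bool × Bool
  rw [tsum_fintype]
  -- singleton set identities
  have hset : ∀ b c : Bool,
      {z : X × Bool × Bool | z.1 = a ∧ z.2.1 = b ∧ z.2.2 = c} = {(a, b, c)} := by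
    intro b c
    ext ⟨x, y, s⟩
    simp [Prod.ext_iff, and_assoc]
  have hkey : ∀ c : Bool, P {z : X × Bool × Bool | z.1 = a ∧ z.2.2 = c}
      = P {(a, true, c)} + P {(a, false, c)} := by
    intro c
    have he : {z : X × Bool × Bool | z.1 = a ∧ z.2.2 = c}
        = {(a, true, c)} ∪ {(a, false, c)} := by
      ext ⟨x, y, s⟩
      cases y <;> simp [Prod.ext_iff]
    rw [he, measure_union (Set.disjoint_singleton.mpr (by simp)) (measurableSet_singleton _)]
  have hkeyA : P {z : X × Bool × Bool | z.1 = a}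
      = P {z : X × Bool × Bool | z.1 = a ∧ z.2.2 = true}
        + P {z : X × Bool × Bool | z.1 = a ∧ z.2.2 = false} := by
    have he : {z : X × Bool × Bool | z.1 = a}
        = {z : X × Bool × Bool | z.1 = a ∧ z.2.2 = true}
          ∪ {z : X × Bool × Bool | z.1 = a ∧ z.2.2 = false} := by
      ext ⟨x, y, s⟩
      cases s <;> simp
    rw [he, measure_union ?_ ((Set.to_countable _).measurableSet)]
    rw [Set.disjoint_left]
    rintro ⟨x, y, s⟩ ⟨-, h1⟩ ⟨-, h2⟩
    simp_all
  have hft : P {((a : X), (false, true))} = 0 := by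
    refine measure_mono_null ?_ hps
    intro z hz
    rw [Set.mem_singleton_iff] at hz
    subst hz
    exact ⟨rfl, rfl⟩
  -- abbreviations
  set ptt : ℝ := (P {((a : X), (true, true))}).toReal with hptt
  set ptf : ℝ := (P {((a : X), (true, false))}).toReal with hptf
  set pff : ℝ := (P {((a : X), (false, false))}).toReal with hpff
  have eq2 : (P {z : X × Bool × Bool | z.1 = a ∧ z.2.2 = true}).toReal = ptt := by
    rw [hkey true, hft, add_zero]
  have eq3 : (P {z : X × Bool × Bool | z.1 = a ∧ z.2.2 = false}).toReal = ptf + pff := by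
    rw [hkey false, ENNReal.toReal_add (measure_ne_top P _) (measure_ne_top P _)]
  have eq1 : (P {z : X × Bool × Bool | z.1 = a}).toReal = ptt + (ptf + pff) := by
    rw [hkeyA, ENNReal.toReal_add (measure_ne_top P _) (measure_ne_top P _), hkey true,
      hkey false, hft, add_zero, ENNReal.toReal_add (measure_ne_top P _) (measure_ne_top P _)]
  have eq4 : (P {z : X × Bool × Bool | z.1 = a ∧ z.2.1 = true ∧ z.2.2 = false}).toReal
      = ptf := by rw [hset]
  have eq5 : (P {z : X × Bool × Bool | z.1 = a ∧ z.2.1 = false ∧ z.2.2 = false}).toReal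
      = pff := by rw [hset]
  rw [eq1, eq2, eq3, eq4, eq5]
  have hexp : ∑ c : Bool × Bool, (P {((a : X), c)}).toReal • h a c.1
      = ptt * h a true + ptf * h a true + pff * h a false := by
    rw [Fintype.sum_prod_type]
    simp only [Fintype.sum_bool, smul_eq_mul]
    have : (P {((a : X), (false, true))}).toReal = 0 := by rw [hft]; simp
    rw [this]
    ring
  rw [hexp]
  exact pu_aux_real ptt ptf pff (h a true) (h a false)
    ENNReal.toReal_nonneg ENNReal.toReal_nonneg ENNReal.toReal_nonneg
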